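/- Let f(z) = z + Σ_{k≥2} a_k z^k ∈ Ω and for n ≥ 2 let ρ_n(z) = Σ_{k≥n+1} a_k z^k. Then for |z| = r < 1, |ρ_n'(z)| ≤ (2r² - r)/(2(1-r)) - ln(1-r)/2. -/

import Mathlib

open Metric Complex

private lemma aux_bdd {c : ℕ → ℂ} {x : ℂ} (h : Summable fun k => c k * x ^ k) :
    ∃ C : ℝ, 0 ≤ C ∧ ∀ k, ‖c k‖ * ‖x‖ ^ k ≤ C := by
  have h0 : Filter.Tendsto (fun k => ‖c k * x ^ k‖) Filter.atTop (nhds 0) := by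
    simpa using h.tendsto_atTop_zero.norm
  obtain ⟨C, hC⟩ := h0.bddAbove_range
  refine ⟨max C 0, le_max_right _ _, fun k => ?_⟩
  have := hC ⟨k, rfl⟩
  simp only [norm_mul, norm_pow] at this
  exact this.trans (le_max_left _ _)

private lemma aux_summable_deriv (c : ℕ → ℂ)
    (hsum : ∀ x : ℂ, ‖x‖ < 1 → Summable fun k => c k * x ^ k)
    {r : ℝ} (h0 : 0 ≤ r) (h1 : r < 1) :
    Summable fun k : ℕ => ‖c k‖ * ((k : ℝ) * r ^ (k - 1)) := by
  obtain ⟨ρ, hρ0, hrρ, hρ1⟩ : ∃ ρ : ℝ, 0 < ρ ∧ r < ρ ∧ ρ < 1 :=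
    ⟨(1 + r) / 2, by positivity, by linarith, by linarith⟩
  have hxρ : ‖(ρ : ℂ)‖ < 1 := by
    rw [Complex.norm_real, Real.norm_eq_abs, _root_.abs_of_nonneg hρ0.le]; exact hρ1
  obtain ⟨C, hC0, hC⟩ := aux_bdd (by simpa using hsum (ρ : ℂ) hxρ)
  have hCρ : ∀ k, ‖c k‖ ≤ C / ρ ^ k := by
    intro k
    rw [le_div_iff₀ (by positivity)]
    have := hC k
    rwa [Complex.norm_real, Real.norm_eq_abs, _root_.abs_of_nonneg hρ0.le] at this
  have hq0 : 0 ≤ r / ρ := by positivity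
  have hq1 : r / ρ < 1 := (div_lt_one hρ0).2 hrρ
  have hmaj : Summable fun k : ℕ => (C / ρ) * ((k : ℝ) * (r / ρ) ^ (k - 1)) := by
    apply Summable.mul_left
    rw [← summable_nat_add_iff 1]
    have h2 : Summable fun k : ℕ => ((k : ℝ) ^ 1 * (r / ρ) ^ k + (r / ρ) ^ k) :=
      (summable_pow_mul_geometric_of_norm_lt_one 1
        (by rwa [Real.norm_eq_abs, _root_.abs_of_nonneg hq0])).add
        (summable_geometric_of_lt_one hq0 hq1)
    apply h2.congr
    intro k
    simp only [Nat.add_sub_cancel]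
    push_cast
    ring
  apply Summable.of_nonneg_of_le _ _ hmaj
  · intro k; positivity
  · intro k
    cases k with
    | zero => simp
    | succ k =>
      simp only [Nat.add_sub_cancel]
      calc ‖c (k + 1)‖ * (((k + 1 : ℕ) : ℝ) * r ^ k)
          ≤ (C / ρ ^ (k + 1)) * (((k + 1 : ℕ) : ℝ) * r ^ k) := by
            apply mul_le_mul_of_nonneg_right _ (by positivity)
            exact hCρ (k + 1)
        _ = (C / ρ) * (((k + 1 : ℕ) : ℝ) * (r / ρ) ^ k) := by
            simp only [div_eq_mul_inv, div_pow, mul_inv, pow_succ]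
            ring

private lemma hasSum_g (f : ℂ → ℂ) (a : ℕ → ℂ)
    (ha : ∀ z ∈ ball (0:ℂ) 1, HasSum (fun k : ℕ => a k * z ^ k) (f z)) :
    ∀ x ∈ ball (0:ℂ) 1,
      HasSum (fun k : ℕ => ((k : ℂ) - 1) * a k * x ^ k) (x * deriv f x - f x) := by
  intro x hx'
  have hx : ‖x‖ < 1 := mem_ball_zero_iff.1 hx'
  have h0x : (0:ℝ) ≤ ‖x‖ := norm_nonneg x
  obtain ⟨r', hr'0, hxr, hr'1⟩ : ∃ r' : ℝ, 0 ≤ r' ∧ ‖x‖ < r' ∧ r' < 1 :=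
    ⟨(1 + ‖x‖) / 2, by positivity, by linarith, by linarith⟩
  have hsum : ∀ y : ℂ, ‖y‖ < 1 → Summable fun k => a k * y ^ k := fun y hy =>
    (ha y (mem_ball_zero_iff.2 hy)).summable
  have hu := aux_summable_deriv a hsum hr'0 hr'1
  have hmem : x ∈ ball (0:ℂ) r' := mem_ball_zero_iff.2 hxr
  have hbound : ∀ k : ℕ, ∀ y ∈ ball (0:ℂ) r',
      ‖a k * ((k : ℂ) * y ^ (k - 1))‖ ≤ ‖a k‖ * ((k : ℝ) * r' ^ (k - 1)) := by
    intro k y hy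
    have hy' : ‖y‖ ≤ r' := (mem_ball_zero_iff.1 hy).le
    rw [norm_mul, norm_mul, norm_pow, Complex.norm_natCast]
    gcongr
  have hD : HasDerivAt (fun w => ∑' k, a k * w ^ k)
      (∑' k, a k * ((k : ℂ) * x ^ (k - 1))) x :=
    hasDerivAt_tsum_of_isPreconnected hu isOpen_ball (convex_ball _ _).isPreconnected
      (fun k y _ => HasDerivAt.const_mul (a k) (hasDerivAt_pow k y)) hbound hmem
      (hsum x hx) hmem
  have hev : (fun w => ∑' k, a k * w ^ k) =ᶠ[nhds x] f := by
    filter_upwards [isOpen_ball.mem_nhds hx'] with w hw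
    exact (ha w hw).tsum_eq
  have hDf : HasDerivAt f (∑' k, a k * ((k : ℂ) * x ^ (k - 1))) x :=
    hev.hasDerivAt_iff.1 hD
  have hSd : Summable fun k => a k * ((k : ℂ) * x ^ (k - 1)) :=
    Summable.of_norm_bounded hu fun k => hbound k x hmem
  have hHd : HasSum (fun k => a k * ((k : ℂ) * x ^ (k - 1))) (deriv f x) := by
    rw [hDf.deriv]; exact hSd.hasSum
  have H3 := (hHd.mul_left x).sub (ha x hx')
  have hfun : (fun k : ℕ => ((k : ℂ) - 1) * a k * x ^ k) =
      fun k => x * (a k * ((k : ℂ) * x ^ (k - 1))) - a k * x ^ k := by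
    funext k
    cases k with
    | zero => simp
    | succ k =>
      simp only [Nat.add_sub_cancel]
      push_cast
      ring
  rw [hfun]
  exact H3

private lemma coeff_le_half {g : ℂ → ℂ} {b : ℕ → ℂ}
    (hgd : DifferentiableOn ℂ g (ball (0:ℂ) 1))
    (hgs : ∀ x ∈ ball (0:ℂ) 1, HasSum (fun k : ℕ => b k * x ^ k) (g x))
    (hgb : ∀ x ∈ ball (0:ℂ) 1, ‖g x‖ ≤ 1/2) (m : ℕ) : ‖b m‖ ≤ 1/2 := by
  set q : FormalMultilinearSeries ℂ ℂ ℂ :=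
    fun k => ContinuousMultilinearMap.mkPiRing ℂ (Fin k) (b k) with hqdef
  have hqc : ∀ k, q.coeff k = b k := by
    intro k
    simp [hqdef, FormalMultilinearSeries.coeff, ContinuousMultilinearMap.mkPiRing_apply]
  have hq : HasFPowerSeriesAt g q 0 := by
    rw [hasFPowerSeriesAt_iff]
    filter_upwards [ball_mem_nhds (0:ℂ) one_pos] with x hx
    simp only [hqc, zero_add, smul_eq_mul]
    have := hgs x hx
    simpa [mul_comm] using this
  have key : ∀ r : ℝ, 0 < r → r < 1 → ‖b m‖ * r ^ m ≤ 1 / 2 := by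
    intro r hr0 hr1
    set R : NNReal := ⟨r, hr0.le⟩ with hRdef
    have hRr : (R : ℝ) = r := rfl
    have hsub : closedBall (0:ℂ) R ⊆ ball (0:ℂ) 1 :=
      closedBall_subset_ball (by rw [hRr]; exact hr1)
    have hp : HasFPowerSeriesOnBall g (cauchyPowerSeries g 0 R) 0 R :=
      (hgd.mono hsub).hasFPowerSeriesOnBall (by rw [← NNReal.coe_pos]; exact hr0)
    have heq : cauchyPowerSeries g (0:ℂ) (R:ℝ) = q :=
      hp.hasFPowerSeriesAt.eq_formalMultilinearSeries hq
    have hcmem : ∀ θ : ℝ, circleMap 0 R θ ∈ ball (0:ℂ) 1 := by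
      intro θ
      rw [mem_ball_zero_iff, norm_circleMap_zero, hRr,
        _root_.abs_of_nonneg hr0.le]
      exact hr1
    have hcont : Continuous fun θ : ℝ => ‖g (circleMap 0 R θ)‖ :=
      (hgd.continuousOn.comp_continuous (continuous_circleMap 0 R)
        (fun θ => ball_subset_ball (le_refl 1) (hcmem θ))).norm
    have hint : (∫ θ : ℝ in (0:ℝ)..2 * Real.pi, ‖g (circleMap 0 R θ)‖) ≤ Real.pi := by
      have h1 : (∫ θ : ℝ in (0:ℝ)..2 * Real.pi, ‖g (circleMap 0 R θ)‖) ≤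
          ∫ _θ : ℝ in (0:ℝ)..2 * Real.pi, (1/2 : ℝ) := by
        apply intervalIntegral.integral_mono_on Real.two_pi_pos.le
          (hcont.intervalIntegrable 0 (2 * Real.pi))
          (continuous_const.intervalIntegrable 0 (2 * Real.pi))
        intro θ _
        exact hgb _ (hcmem θ)
      rw [intervalIntegral.integral_const, smul_eq_mul] at h1
      linarith [h1]
    have hb := norm_cauchyPowerSeries_le g 0 (R : ℝ) m
    rw [heq] at hb
    have hqm : ‖q m‖ = ‖b m‖ := by
      rw [FormalMultilinearSeries.norm_apply_eq_norm_coef, hqc]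
    rw [hqm, hRr, _root_.abs_of_nonneg hr0.le] at hb
    have hb2 : ‖b m‖ ≤ (1/2) * (r⁻¹) ^ m := by
      refine hb.trans ?_
      apply mul_le_mul_of_nonneg_right _ (by positivity)
      calc (2 * Real.pi)⁻¹ * ∫ θ : ℝ in (0:ℝ)..2 * Real.pi, ‖g (circleMap 0 R θ)‖
          ≤ (2 * Real.pi)⁻¹ * Real.pi := by
            apply mul_le_mul_of_nonneg_left hint (by positivity)
        _ = 1/2 := by
            rw [mul_inv]
            field_simp
    calc ‖b m‖ * r ^ m ≤ ((1/2) * (r⁻¹) ^ m) * r ^ m :=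
          mul_le_mul_of_nonneg_right hb2 (by positivity)
      _ = 1/2 := by
          rw [mul_assoc, ← mul_pow, inv_mul_cancel₀ hr0.ne', one_pow, mul_one]
  have hlim : Filter.Tendsto (fun r : ℝ => ‖b m‖ * r ^ m)
      (nhdsWithin 1 (Set.Iio 1)) (nhds (‖b m‖)) := by
    have hc : Filter.Tendsto (fun r : ℝ => ‖b m‖ * r ^ m) (nhds 1) (nhds (‖b m‖ * 1 ^ m)) :=
      ((continuous_const.mul (continuous_pow m)).tendsto 1)
    simpa using hc.mono_left nhdsWithin_le_nhds
  refine le_of_tendsto hlim ?_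
  have h1 : ∀ᶠ r in nhdsWithin (1:ℝ) (Set.Iio 1), r ∈ Set.Ioi (0:ℝ) :=
    Filter.Eventually.filter_mono nhdsWithin_le_nhds
      (isOpen_Ioi.eventually_mem (by norm_num : (1:ℝ) ∈ Set.Ioi (0:ℝ)))
  filter_upwards [h1, eventually_mem_nhdsWithin] with r hr0 hr1
  exact key r hr0 hr1

theorem stmt_5 (f : ℂ → ℂ) (a : ℕ → ℂ) (n : ℕ) (hn : 2 ≤ n)
    (hf : DifferentiableOn ℂ f (ball (0:ℂ) 1))
    (ha : ∀ z ∈ ball (0:ℂ) 1, HasSum (fun k : ℕ => a k * z ^ k) (f z))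
    (ha0 : a 0 = 0) (ha1 : a 1 = 1)
    (hΩ : ∀ z ∈ ball (0:ℂ) 1, ‖z * deriv f z - f z‖ < 1/2) :
    ∀ z ∈ ball (0:ℂ) 1,
      ‖deriv (fun w : ℂ => ∑' k : ℕ, a (k + n + 1) * w ^ (k + n + 1)) z‖ ≤
        (2 * ‖z‖^2 - ‖z‖) / (2 * (1 - ‖z‖)) - Real.log (1 - ‖z‖) / 2 := by
  -- coefficient bound
  have hfa := hf.analyticOnNhd isOpen_ball
  have hgd : DifferentiableOn ℂ (fun w => w * deriv f w - f w) (ball (0:ℂ) 1) :=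
    (differentiableOn_id.mul hfa.deriv.differentiableOn).sub hf
  have hcb : ∀ m : ℕ, ‖((m : ℂ) - 1) * a m‖ ≤ 1/2 :=
    coeff_le_half hgd (hasSum_g f a ha) (fun x hx => (hΩ x hx).le)
  have hab : ∀ k : ℕ, ‖a (k + n + 1)‖ ≤ 1 / (2 * ((k : ℝ) + n)) := by
    intro k
    have h := hcb (k + n + 1)
    have hcast : (((k + n + 1 : ℕ) : ℂ) - 1) = ((k + n : ℕ) : ℂ) := by push_cast; ring
    rw [norm_mul, hcast, Complex.norm_natCast] at h
    have hkn : (0:ℝ) < (k : ℝ) + n := by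
      have : (2:ℝ) ≤ (n : ℝ) := by exact_mod_cast hn
      linarith [Nat.cast_nonneg (α := ℝ) k]
    rw [le_div_iff₀ (by positivity)]
    calc ‖a (k + n + 1)‖ * (2 * ((k:ℝ) + n)) = 2 * (((k + n : ℕ) : ℝ) * ‖a (k + n + 1)‖) := by
          push_cast; ring
      _ ≤ 2 * (1/2) := by
          apply mul_le_mul_of_nonneg_left h (by norm_num)
      _ = 1 := by norm_num
  intro z hz'
  have hz : ‖z‖ < 1 := mem_ball_zero_iff.1 hz'
  have hr0 : (0:ℝ) ≤ ‖z‖ := norm_nonneg z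
  obtain ⟨r', hr'0, hzr, hr'1⟩ : ∃ r' : ℝ, 0 ≤ r' ∧ ‖z‖ < r' ∧ r' < 1 :=
    ⟨(1 + ‖z‖) / 2, by positivity, by linarith, by linarith⟩
  have hn2 : (2:ℝ) ≤ (n : ℝ) := by exact_mod_cast hn
  have habs1 : ∀ k : ℕ, ‖a (k + n + 1)‖ ≤ 1 := by
    intro k
    refine (hab k).trans ?_
    rw [div_le_one (by positivity)]
    linarith [Nat.cast_nonneg (α := ℝ) k]
  -- derivative of the tail series
  have hu : Summable (fun k : ℕ => ((k + n + 1 : ℕ) : ℝ) * r' ^ (k + n)) := by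
    have h1 : Summable (fun j : ℕ => ((j + 1 : ℕ) : ℝ) * r' ^ j) := by
      have h2 : Summable fun j : ℕ => ((j : ℝ) ^ 1 * r' ^ j + r' ^ j) :=
        (summable_pow_mul_geometric_of_norm_lt_one 1
          (by rwa [Real.norm_eq_abs, _root_.abs_of_nonneg hr'0])).add
          (summable_geometric_of_lt_one hr'0 hr'1)
      apply h2.congr
      intro j
      push_cast
      ring
    have h2 := h1.comp_injective (add_left_injective n)
    apply h2.congr
    intro k
    rfl
  have hmem : z ∈ ball (0:ℂ) r' := mem_ball_zero_iff.2 hzr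
  have hbound : ∀ k : ℕ, ∀ y ∈ ball (0:ℂ) r',
      ‖a (k + n + 1) * (((k + n + 1 : ℕ) : ℂ) * y ^ (k + n))‖ ≤
        ((k + n + 1 : ℕ) : ℝ) * r' ^ (k + n) := by
    intro k y hy
    have hy' : ‖y‖ ≤ r' := (mem_ball_zero_iff.1 hy).le
    rw [norm_mul, norm_mul, norm_pow, Complex.norm_natCast]
    calc ‖a (k + n + 1)‖ * (((k + n + 1 : ℕ) : ℝ) * ‖y‖ ^ (k + n))
        ≤ 1 * (((k + n + 1 : ℕ) : ℝ) * r' ^ (k + n)) := by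
          apply mul_le_mul (habs1 k) _ (by positivity) (by norm_num)
          gcongr
      _ = ((k + n + 1 : ℕ) : ℝ) * r' ^ (k + n) := one_mul _
  have hg0 : Summable fun k : ℕ => a (k + n + 1) * z ^ (k + n + 1) := by
    have := (ha z hz').summable.comp_injective (add_left_injective (n + 1))
    apply this.congr
    intro k
    rfl
  have hD : HasDerivAt (fun w : ℂ => ∑' k : ℕ, a (k + n + 1) * w ^ (k + n + 1))
      (∑' k : ℕ, a (k + n + 1) * (((k + n + 1 : ℕ) : ℂ) * z ^ (k + n))) z := by
    refine hasDerivAt_tsum_of_isPreconnected hu isOpen_ball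
      (convex_ball _ _).isPreconnected (fun k y _ => ?_) hbound hmem hg0 hmem
    have := HasDerivAt.const_mul (a (k + n + 1)) (hasDerivAt_pow (k + n + 1) y)
    simpa only [Nat.add_sub_cancel] using this
  rw [hD.deriv]
  -- bounding series
  set r := ‖z‖ with hrdef
  have h1r : (1:ℝ) - r ≠ 0 := by
    intro h; rw [sub_eq_zero] at h; exact absurd h.symm hz.ne
  have S1 : HasSum (fun k : ℕ => (1/2 : ℝ) * r ^ (k + 2)) ((1/2) * r ^ 2 * (1 - r)⁻¹) := by
    have := (hasSum_geometric_of_lt_one hr0 hz).mul_left ((1/2) * r ^ 2)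
    have hfun : (fun k : ℕ => (1/2 : ℝ) * r ^ 2 * r ^ k) = fun k => (1/2 : ℝ) * r ^ (k + 2) := by
      funext k; ring
    rw [hfun] at this
    simpa [mul_assoc] using this
  have S2 : HasSum (fun k : ℕ => r ^ (k + 2) / ((k : ℝ) + 2) / 2)
      ((-Real.log (1 - r) - r) / 2) := by
    have L := Real.hasSum_pow_div_log_of_abs_lt_one
      (x := r) (by rwa [_root_.abs_of_nonneg hr0])
    have S2' : HasSum (fun k : ℕ => r ^ ((k + 1) + 1) / (((k + 1 : ℕ) : ℝ) + 1))
        (-Real.log (1 - r) - r) := by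
      apply (hasSum_nat_add_iff (f := fun j : ℕ => r ^ (j + 1) / ((j : ℝ) + 1)) 1).2
      simpa using L
    have hfun2 : (fun k : ℕ => r ^ ((k + 1) + 1) / (((k + 1 : ℕ) : ℝ) + 1)) =
        fun k : ℕ => r ^ (k + 2) / ((k : ℝ) + 2) := by
      funext k
      push_cast
      ring_nf
    rw [hfun2] at S2'
    exact S2'.div_const 2
  have Stot := S1.add S2
  -- termwise bound
  have hterm : ∀ k : ℕ, ‖a (k + n + 1) * (((k + n + 1 : ℕ) : ℂ) * z ^ (k + n))‖ ≤
      (1/2 : ℝ) * r ^ (k + 2) + r ^ (k + 2) / ((k : ℝ) + 2) / 2 := by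
    intro k
    have hkn : (0:ℝ) < (k : ℝ) + n := by linarith [Nat.cast_nonneg (α := ℝ) k]
    have hk2 : (0:ℝ) < (k : ℝ) + 2 := by linarith [Nat.cast_nonneg (α := ℝ) k]
    rw [norm_mul, norm_mul, norm_pow, Complex.norm_natCast]
    calc ‖a (k + n + 1)‖ * (((k + n + 1 : ℕ) : ℝ) * r ^ (k + n))
        ≤ (1 / (2 * ((k : ℝ) + n))) * (((k + n + 1 : ℕ) : ℝ) * r ^ (k + n)) := by
          apply mul_le_mul_of_nonneg_right (hab k) (by positivity)
      _ ≤ (1 / (2 * ((k : ℝ) + n))) * (((k + n + 1 : ℕ) : ℝ) * r ^ (k + 2)) := by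
          apply mul_le_mul_of_nonneg_left _ (by positivity)
          apply mul_le_mul_of_nonneg_left _ (by positivity)
          exact pow_le_pow_of_le_one hr0 hz.le (by omega)
      _ = (((k : ℝ) + n + 1) / (2 * ((k : ℝ) + n))) * r ^ (k + 2) := by
          push_cast; ring
      _ ≤ (((k : ℝ) + 3) / (2 * ((k : ℝ) + 2))) * r ^ (k + 2) := by
          apply mul_le_mul_of_nonneg_right _ (by positivity)
          rw [div_le_div_iff₀ (by positivity) (by positivity)]
          nlinarith [Nat.cast_nonneg (α := ℝ) k]
      _ = (1/2 : ℝ) * r ^ (k + 2) + r ^ (k + 2) / ((k : ℝ) + 2) / 2 := by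
          field_simp
          ring
  have hsn : Summable fun k : ℕ =>
      ‖a (k + n + 1) * (((k + n + 1 : ℕ) : ℂ) * z ^ (k + n))‖ :=
    Summable.of_nonneg_of_le (fun k => norm_nonneg _) hterm Stot.summable
  calc ‖∑' k : ℕ, a (k + n + 1) * (((k + n + 1 : ℕ) : ℂ) * z ^ (k + n))‖
      ≤ ∑' k : ℕ, ‖a (k + n + 1) * (((k + n + 1 : ℕ) : ℂ) * z ^ (k + n))‖ :=
        norm_tsum_le_tsum_norm hsn
    _ ≤ ∑' k : ℕ, ((1/2 : ℝ) * r ^ (k + 2) + r ^ (k + 2) / ((k : ℝ) + 2) / 2) :=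
        Summable.tsum_le_tsum hterm hsn Stot.summable
    _ = (1/2) * r ^ 2 * (1 - r)⁻¹ + (-Real.log (1 - r) - r) / 2 := Stot.tsum_eq
    _ = (2 * r^2 - r) / (2 * (1 - r)) - Real.log (1 - r) / 2 := by
        field_simp
        ring
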